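/- For any matrix X with compact SVD X = U S Vᵀ (U, V having orthonormal columns and S diagonal positive), and any matrix Y, the inequality ‖Y‖_* ≥ ‖X‖_* + ⟨UVᵀ, Y − X⟩ holds, where ‖·‖_* is the nuclear norm and ⟨·,·⟩ the Frobenius inner product; i.e., UVᵀ is a subgradient of the nuclear norm at X. -/

import Mathlib

open scoped BigOperators
open Matrix

section Helpers

private lemma dotmv {a b : ℕ} (A : Matrix (Fin a) (Fin b) ℝ) (v : Fin a → ℝ) (w : Fin b → ℝ) :
    v ⬝ᵥ (A *ᵥ w) = (Aᵀ *ᵥ v) ⬝ᵥ w := by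
  rw [dotProduct_mulVec, mulVec_transpose]

private lemma dot_self_nonneg {k : ℕ} (v : Fin k → ℝ) : 0 ≤ v ⬝ᵥ v :=
  Finset.sum_nonneg fun i _ => mul_self_nonneg _

private lemma dotCS {k : ℕ} (f g : Fin k → ℝ) :
    f ⬝ᵥ g ≤ Real.sqrt (f ⬝ᵥ f) * Real.sqrt (g ⬝ᵥ g) := by
  have := Real.sum_mul_le_sqrt_mul_sqrt Finset.univ f g
  simpa [dotProduct, sq] using this

private lemma proj_contract {k : ℕ} (P : Matrix (Fin k) (Fin k) ℝ) (hs : Pᵀ = P)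
    (hi : P * P = P) (q : Fin k → ℝ) : q ⬝ᵥ (P *ᵥ q) ≤ q ⬝ᵥ q := by
  have h1 : (P *ᵥ q) ⬝ᵥ (P *ᵥ q) = q ⬝ᵥ (P *ᵥ q) := by
    rw [dotmv, mulVec_mulVec, hs, hi, dotProduct_comm]
  have h0 : 0 ≤ (q - P *ᵥ q) ⬝ᵥ (q - P *ᵥ q) := dot_self_nonneg _
  have h2 : (P *ᵥ q) ⬝ᵥ q = q ⬝ᵥ (P *ᵥ q) := dotProduct_comm _ _
  rw [sub_dotProduct, dotProduct_sub, dotProduct_sub] at h0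
  linarith

end Helpers

/-- Nuclear norm of a real matrix: the sum of its singular values, i.e. the sum
of the square roots of the eigenvalues of `Aᵀ A`. -/
noncomputable def nuclearNorm {n m : ℕ} (A : Matrix (Fin n) (Fin m) ℝ) : ℝ :=
  ∑ i, Real.sqrt ((Matrix.isHermitian_conjTranspose_mul_self A).eigenvalues i)

/-- Duality bound: if `M` is a contraction then `⟨M, Y⟩ ≤ ‖Y‖₊`. -/
private lemma dual_le {n m : ℕ} (M Y : Matrix (Fin n) (Fin m) ℝ)
    (hM : ∀ z : Fin m → ℝ, (M *ᵥ z) ⬝ᵥ (M *ᵥ z) ≤ z ⬝ᵥ z) :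
    Matrix.trace (Mᵀ * Y) ≤ nuclearNorm Y := by
  have hB := Matrix.isHermitian_conjTranspose_mul_self Y
  set q : Fin m → Fin m → ℝ := fun i => ⇑(hB.eigenvectorBasis i) with hqdef
  have heig : ∀ i, (Yᵀ * Y) *ᵥ q i = hB.eigenvalues i • q i := fun i =>
    hB.mulVec_eigenvectorBasis i
  have horth : ∀ i j, q i ⬝ᵥ q j = if i = j then 1 else 0 := by
    intro i j
    have := (orthonormal_iff_ite (𝕜 := ℝ)).mp hB.eigenvectorBasis.orthonormal i j
    rw [← this]
    simp only [PiLp.inner_apply, RCLike.inner_apply, starRingEnd_apply, star_trivial, dotProduct]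
    exact Finset.sum_congr rfl fun x _ => mul_comm _ _
  set Q : Matrix (Fin m) (Fin m) ℝ := (hB.eigenvectorUnitary : Matrix (Fin m) (Fin m) ℝ) with hQ
  have hQQ : Q * Qᵀ = 1 := by
    have h := (Matrix.mem_unitaryGroup_iff).mp hB.eigenvectorUnitary.2
    simp only [star_eq_conjTranspose, conjTranspose_eq_transpose_of_trivial] at h
    exact h
  -- trace as a sum over eigenvectors
  have htr : Matrix.trace (Mᵀ * Y) = ∑ i, q i ⬝ᵥ ((Mᵀ * Y) *ᵥ q i) := by
    have e1 : Matrix.trace (Qᵀ * (Mᵀ * Y) * Q) = Matrix.trace (Mᵀ * Y) := by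
      rw [Matrix.trace_mul_cycle, hQQ, Matrix.one_mul]
    rw [← e1]
    rw [Matrix.trace]
    apply Finset.sum_congr rfl
    intro i _
    rw [Matrix.mul_assoc]
    rfl
  have hYnorm : ∀ i, (Y *ᵥ q i) ⬝ᵥ (Y *ᵥ q i) = hB.eigenvalues i := by
    intro i
    have h : q i ⬝ᵥ ((Yᵀ * Y) *ᵥ q i) = (Y *ᵥ q i) ⬝ᵥ (Y *ᵥ q i) := by
      rw [← mulVec_mulVec, dotmv, transpose_transpose]
    rw [← h, heig i, dotProduct_smul, horth, if_pos rfl, smul_eq_mul, mul_one]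
  have hnn : nuclearNorm Y = ∑ i, Real.sqrt (hB.eigenvalues i) := rfl
  rw [htr, hnn]
  apply Finset.sum_le_sum
  intro i _
  have hstep : q i ⬝ᵥ ((Mᵀ * Y) *ᵥ q i) = (M *ᵥ q i) ⬝ᵥ (Y *ᵥ q i) := by
    rw [← mulVec_mulVec, dotmv, transpose_transpose]
  rw [hstep]
  calc (M *ᵥ q i) ⬝ᵥ (Y *ᵥ q i)
      ≤ Real.sqrt ((M *ᵥ q i) ⬝ᵥ (M *ᵥ q i)) * Real.sqrt ((Y *ᵥ q i) ⬝ᵥ (Y *ᵥ q i)) :=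
        dotCS _ _
    _ ≤ Real.sqrt (q i ⬝ᵥ q i) * Real.sqrt (hB.eigenvalues i) := by
        rw [hYnorm i]
        exact mul_le_mul_of_nonneg_right (Real.sqrt_le_sqrt (hM (q i))) (Real.sqrt_nonneg _)
    _ = Real.sqrt (hB.eigenvalues i) := by
        rw [horth, if_pos rfl, Real.sqrt_one, one_mul]

private lemma nuclear_le_sum {n m r : ℕ}
    (X : Matrix (Fin n) (Fin m) ℝ)
    (U : Matrix (Fin n) (Fin r) ℝ) (V : Matrix (Fin m) (Fin r) ℝ)
    (σ : Fin r → ℝ)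
    (hU : Uᵀ * U = 1) (hV : Vᵀ * V = 1) (hσ : ∀ i, 0 ≤ σ i)
    (hX : X = U * Matrix.diagonal σ * Vᵀ) :
    nuclearNorm X ≤ ∑ j, σ j := by
  have hA := Matrix.isHermitian_conjTranspose_mul_self X
  set μ : Fin m → ℝ := hA.eigenvalues with hμdef
  set q : Fin m → Fin m → ℝ := fun i => ⇑(hA.eigenvectorBasis i) with hqdef
  have heig : ∀ i, (Xᵀ * X) *ᵥ q i = μ i • q i := fun i => hA.mulVec_eigenvectorBasis i
  have horth : ∀ i j, q i ⬝ᵥ q j = if i = j then 1 else 0 := by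
    intro i j
    have := (orthonormal_iff_ite (𝕜 := ℝ)).mp hA.eigenvectorBasis.orthonormal i j
    rw [← this]
    simp only [PiLp.inner_apply, RCLike.inner_apply, starRingEnd_apply, star_trivial, dotProduct]
    exact Finset.sum_congr rfl fun x _ => mul_comm _ _
  set Q : Matrix (Fin m) (Fin m) ℝ := (hA.eigenvectorUnitary : Matrix (Fin m) (Fin m) ℝ) with hQ
  have hQap : ∀ a i, Q a i = q i a := fun a i => rfl
  have hQQ : Q * Qᵀ = 1 := by
    have h := (Matrix.mem_unitaryGroup_iff).mp hA.eigenvectorUnitary.2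
    simp only [star_eq_conjTranspose, conjTranspose_eq_transpose_of_trivial] at h
    exact h
  -- ⟨X qᵢ, X qⱼ⟩ = μ j · δᵢⱼ
  have hXq : ∀ i j, (X *ᵥ q i) ⬝ᵥ (X *ᵥ q j) = if i = j then μ j else 0 := by
    intro i j
    have h : q i ⬝ᵥ ((Xᵀ * X) *ᵥ q j) = (X *ᵥ q i) ⬝ᵥ (X *ᵥ q j) := by
      rw [← mulVec_mulVec, dotmv, transpose_transpose]
    rw [← h, heig j, dotProduct_smul, horth, smul_eq_mul]
    by_cases hij : i = j <;> simp [hij]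
  have hμ0 : ∀ i, 0 ≤ μ i := by
    intro i
    have := hXq i i
    rw [if_pos rfl] at this
    rw [← this]
    exact dot_self_nonneg _
  -- normalized images of the eigenvectors
  set c : Fin m → ℝ := fun i => if μ i = 0 then 0 else (Real.sqrt (μ i))⁻¹ with hcdef
  set p : Fin m → Fin n → ℝ := fun i => c i • (X *ᵥ q i) with hpdef
  have hsqrt : ∀ i, Real.sqrt (μ i) = p i ⬝ᵥ (X *ᵥ q i) := by
    intro i
    show Real.sqrt (μ i) = (c i • (X *ᵥ q i)) ⬝ᵥ (X *ᵥ q i)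
    rw [smul_dotProduct, hXq i i, if_pos rfl, smul_eq_mul]
    by_cases h0 : μ i = 0
    · simp [hcdef, h0]
    · have hpos : 0 < Real.sqrt (μ i) := Real.sqrt_pos.mpr (lt_of_le_of_ne (hμ0 i) (Ne.symm h0))
      have hmul : Real.sqrt (μ i) * Real.sqrt (μ i) = μ i := Real.mul_self_sqrt (hμ0 i)
      simp only [hcdef, if_neg h0]
      field_simp
      rw [sq, hmul]
  have hpp : ∀ i j, p i ⬝ᵥ p j = if i = j then (if μ i = 0 then 0 else 1) else 0 := by
    intro i j
    show (c i • (X *ᵥ q i)) ⬝ᵥ (c j • (X *ᵥ q j)) = _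
    rw [smul_dotProduct, dotProduct_smul, hXq i j, smul_eq_mul, smul_eq_mul]
    by_cases hij : i = j
    · subst hij
      rw [if_pos rfl, if_pos rfl]
      by_cases h0 : μ i = 0
      · simp [hcdef, h0]
      · have hpos : 0 < Real.sqrt (μ i) := Real.sqrt_pos.mpr (lt_of_le_of_ne (hμ0 i) (Ne.symm h0))
        have hmul : Real.sqrt (μ i) * Real.sqrt (μ i) = μ i := Real.mul_self_sqrt (hμ0 i)
        rw [if_neg h0, hcdef]
        simp only [if_neg h0]
        field_simp
        rw [sq, hmul]
    · simp [hij]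
  -- matrix with columns p i
  set P : Matrix (Fin n) (Fin m) ℝ := Matrix.of (fun a i => p i a) with hPdef
  have hPtP : Pᵀ * P = Matrix.diagonal (fun i => if μ i = 0 then (0:ℝ) else 1) := by
    ext i j
    rw [Matrix.mul_apply, Matrix.diagonal_apply]
    have : ∑ a, Pᵀ i a * P a j = p i ⬝ᵥ p j := rfl
    rw [this, hpp i j]
  have hPe : P * Matrix.diagonal (fun i => if μ i = 0 then (0:ℝ) else 1) = P := by
    ext a j
    rw [Matrix.mul_diagonal]
    by_cases h0 : μ j = 0
    · have : P a j = 0 := by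
        show c j * (X *ᵥ q j) a = 0
        simp [hcdef, h0]
      simp [h0, this]
    · simp [h0]
  have hProj : (P * Pᵀ) * (P * Pᵀ) = P * Pᵀ := by
    have h1 : P * Pᵀ * (P * Pᵀ) = P * ((Pᵀ * P) * Pᵀ) := by
      simp only [Matrix.mul_assoc]
    rw [h1, hPtP, ← Matrix.mul_assoc, hPe]
  have hProjSym : (P * Pᵀ)ᵀ = P * Pᵀ := by
    rw [Matrix.transpose_mul, Matrix.transpose_transpose]
  -- Bessel-type bounds
  have hBesselP : ∀ u : Fin n → ℝ, (Pᵀ *ᵥ u) ⬝ᵥ (Pᵀ *ᵥ u) ≤ u ⬝ᵥ u := by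
    intro u
    have h : u ⬝ᵥ ((P * Pᵀ) *ᵥ u) = (Pᵀ *ᵥ u) ⬝ᵥ (Pᵀ *ᵥ u) := by
      rw [← mulVec_mulVec, dotmv]
    rw [← h]
    exact proj_contract _ hProjSym hProj u
  have hBesselQ : ∀ v : Fin m → ℝ, (Qᵀ *ᵥ v) ⬝ᵥ (Qᵀ *ᵥ v) = v ⬝ᵥ v := by
    intro v
    have h : v ⬝ᵥ ((Q * Qᵀ) *ᵥ v) = (Qᵀ *ᵥ v) ⬝ᵥ (Qᵀ *ᵥ v) := by
      rw [← mulVec_mulVec, dotmv]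
    rw [← h, hQQ, Matrix.one_mulVec]
  -- main computation
  have hnn : nuclearNorm X = ∑ i, Real.sqrt (μ i) := rfl
  rw [hnn]
  have hterm : ∀ i, Real.sqrt (μ i) = ∑ j, (Uᵀ *ᵥ p i) j * (σ j * (Vᵀ *ᵥ q i) j) := by
    intro i
    rw [hsqrt i, hX]
    rw [← Matrix.mulVec_mulVec, ← Matrix.mulVec_mulVec, dotmv]
    apply Finset.sum_congr rfl
    intro j _
    rw [Matrix.mulVec_diagonal]
  calc ∑ i, Real.sqrt (μ i)
      = ∑ i, ∑ j, (Uᵀ *ᵥ p i) j * (σ j * (Vᵀ *ᵥ q i) j) := by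
        exact Finset.sum_congr rfl fun i _ => hterm i
    _ = ∑ j, σ j * ∑ i, (Uᵀ *ᵥ p i) j * (Vᵀ *ᵥ q i) j := by
        rw [Finset.sum_comm]
        apply Finset.sum_congr rfl
        intro j _
        rw [Finset.mul_sum]
        apply Finset.sum_congr rfl
        intro i _
        ring
    _ ≤ ∑ j, σ j * 1 := by
        apply Finset.sum_le_sum
        intro j _
        apply mul_le_mul_of_nonneg_left _ (hσ j)
        -- Cauchy–Schwarz in the i variable
        have hCS := Real.sum_mul_le_sqrt_mul_sqrt Finset.univ
          (fun i => (Uᵀ *ᵥ p i) j) (fun i => (Vᵀ *ᵥ q i) j)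
        have ha : ∑ i, ((Uᵀ *ᵥ p i) j) ^ 2 ≤ 1 := by
          have key : ∀ i, (Uᵀ *ᵥ p i) j = (Pᵀ *ᵥ (fun a => U a j)) i := by
            intro i
            show (fun a => U a j) ⬝ᵥ p i = p i ⬝ᵥ (fun a => U a j)
            exact dotProduct_comm _ _
          have hsum : ∑ i, ((Uᵀ *ᵥ p i) j) ^ 2
              = (Pᵀ *ᵥ (fun a => U a j)) ⬝ᵥ (Pᵀ *ᵥ (fun a => U a j)) := by
            apply Finset.sum_congr rfl
            intro i _
            rw [key i, sq]
          rw [hsum]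
          have hu : (fun a => U a j) ⬝ᵥ (fun a => U a j) = 1 := by
            have : (fun a => U a j) ⬝ᵥ (fun a => U a j) = (Uᵀ * U) j j := by
              rw [Matrix.mul_apply]; rfl
            rw [this, hU, Matrix.one_apply_eq]
          rw [← hu]
          exact hBesselP _
        have hb : ∑ i, ((Vᵀ *ᵥ q i) j) ^ 2 ≤ 1 := by
          have key : ∀ i, (Vᵀ *ᵥ q i) j = (Qᵀ *ᵥ (fun a => V a j)) i := by
            intro i
            show (fun a => V a j) ⬝ᵥ q i = q i ⬝ᵥ (fun a => V a j)
            exact dotProduct_comm _ _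
          have hsum : ∑ i, ((Vᵀ *ᵥ q i) j) ^ 2
              = (Qᵀ *ᵥ (fun a => V a j)) ⬝ᵥ (Qᵀ *ᵥ (fun a => V a j)) := by
            apply Finset.sum_congr rfl
            intro i _
            rw [key i, sq]
          rw [hsum, hBesselQ]
          have : (fun a => V a j) ⬝ᵥ (fun a => V a j) = (Vᵀ * V) j j := by
            rw [Matrix.mul_apply]; rfl
          rw [this, hV, Matrix.one_apply_eq]
        calc ∑ i, (Uᵀ *ᵥ p i) j * (Vᵀ *ᵥ q i) j
            ≤ Real.sqrt (∑ i, ((Uᵀ *ᵥ p i) j) ^ 2) * Real.sqrt (∑ i, ((Vᵀ *ᵥ q i) j) ^ 2) :=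
              hCS
          _ ≤ Real.sqrt 1 * Real.sqrt 1 :=
              mul_le_mul (Real.sqrt_le_sqrt ha) (Real.sqrt_le_sqrt hb)
                (Real.sqrt_nonneg _) (Real.sqrt_nonneg _)
          _ = 1 := by rw [Real.sqrt_one, mul_one]
    _ = ∑ j, σ j := by simp

/-- `UVᵀ` is a subgradient of the nuclear norm at `X = U S Vᵀ`:
for every matrix `Y`, `‖Y‖_* ≥ ‖X‖_* + ⟨UVᵀ, Y − X⟩`. -/
theorem nuclearNorm_subgradient {n m r : ℕ}
    (X Y : Matrix (Fin n) (Fin m) ℝ)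
    (U : Matrix (Fin n) (Fin r) ℝ) (V : Matrix (Fin m) (Fin r) ℝ)
    (S : Matrix (Fin r) (Fin r) ℝ) (σ : Fin r → ℝ)
    (hU : Uᵀ * U = 1) (hV : Vᵀ * V = 1)
    (hS : S = Matrix.diagonal σ) (hσ : ∀ i, 0 < σ i)
    (hX : X = U * S * Vᵀ) :
    nuclearNorm X + Matrix.trace ((U * Vᵀ)ᵀ * (Y - X)) ≤ nuclearNorm Y := by
  subst hS
  have hσ0 : ∀ i, 0 ≤ σ i := fun i => (hσ i).le
  have h1 : nuclearNorm X ≤ ∑ j, σ j := nuclear_le_sum X U V σ hU hV hσ0 hX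
  have hcontr : ∀ z : Fin m → ℝ, ((U * Vᵀ) *ᵥ z) ⬝ᵥ ((U * Vᵀ) *ᵥ z) ≤ z ⬝ᵥ z := by
    intro z
    rw [← mulVec_mulVec]
    have hU2 : ∀ w : Fin r → ℝ, (U *ᵥ w) ⬝ᵥ (U *ᵥ w) = w ⬝ᵥ w := by
      intro w
      rw [dotmv, mulVec_mulVec, hU, Matrix.one_mulVec]
    rw [hU2]
    have hsym : (V * Vᵀ)ᵀ = V * Vᵀ := by rw [Matrix.transpose_mul, Matrix.transpose_transpose]
    have hidem : (V * Vᵀ) * (V * Vᵀ) = V * Vᵀ := by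
      have h : V * Vᵀ * (V * Vᵀ) = V * ((Vᵀ * V) * Vᵀ) := by simp only [Matrix.mul_assoc]
      rw [h, hV, Matrix.one_mul]
    have h := proj_contract (V * Vᵀ) hsym hidem z
    have he : (Vᵀ *ᵥ z) ⬝ᵥ (Vᵀ *ᵥ z) = z ⬝ᵥ ((V * Vᵀ) *ᵥ z) := by
      rw [← mulVec_mulVec, dotmv, Matrix.transpose_transpose, dotProduct_comm]
    rw [he]
    exact h
  have h2 : Matrix.trace ((U * Vᵀ)ᵀ * Y) ≤ nuclearNorm Y := dual_le _ _ hcontr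
  have h3 : Matrix.trace ((U * Vᵀ)ᵀ * X) = ∑ j, σ j := by
    rw [hX]
    have e : (U * Vᵀ)ᵀ * (U * Matrix.diagonal σ * Vᵀ) = V * Matrix.diagonal σ * Vᵀ := by
      rw [Matrix.transpose_mul, Matrix.transpose_transpose]
      have h : V * Uᵀ * (U * Matrix.diagonal σ * Vᵀ)
          = V * ((Uᵀ * U) * (Matrix.diagonal σ * Vᵀ)) := by
        simp only [Matrix.mul_assoc]
      rw [h, hU, Matrix.one_mul, ← Matrix.mul_assoc]
    rw [e, Matrix.trace_mul_cycle, hV, Matrix.one_mul, Matrix.trace_diagonal]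
  have h4 : Matrix.trace ((U * Vᵀ)ᵀ * (Y - X))
      = Matrix.trace ((U * Vᵀ)ᵀ * Y) - Matrix.trace ((U * Vᵀ)ᵀ * X) := by
    rw [Matrix.mul_sub, Matrix.trace_sub]
  rw [h4, h3]
  linarith
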